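/- Let H be a Hilbert space and G a subgroup of the unitary group of H that is compact in the strong-* topology. Then there is a conditional expectation E_G : B(H) → G' (the commutant of G) given by integrating u ↦ u*au against Haar measure on G, and it satisfies ‖E_G(a) − a‖ ≤ sup_{u∈G} ‖[a,u]‖ for all a ∈ B(H). -/

import Mathlib

open MeasureTheory

theorem compact_group_conditional_expectation
    {H : Type*} [NormedAddCommGroup H] [InnerProductSpace ℂ H] [CompleteSpace H]
    {G : Type*} [Group G] [TopologicalSpace G] [IsTopologicalGroup G]
    [CompactSpace G] [MeasurableSpace G] [BorelSpace G]
    (π : G →* (H →L[ℂ] H)) (hπ : Function.Injective π)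
    (hunitary : ∀ u : G, π u ∈ unitary (H →L[ℂ] H))
    -- the group is compact in the strong-* topology: the maps `u ↦ uξ` and
    -- `u ↦ u*ξ` are continuous for every vector `ξ`
    (hcont : ∀ ξ : H, Continuous fun u : G => π u ξ)
    (hcont' : ∀ ξ : H, Continuous fun u : G => (star (π u)) ξ)
    -- the normalized Haar measure on `G`
    (μ : Measure G) [μ.IsHaarMeasure] [IsProbabilityMeasure μ] :
    ∃ E : (H →L[ℂ] H) → (H →L[ℂ] H),
      -- `E` is the weak-operator (Pettis) integral of `u ↦ u* a u` against Haar
      (∀ a : H →L[ℂ] H, ∀ ξ η : H,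
        (inner ℂ (E a ξ) η : ℂ) = ∫ u : G, (inner ℂ ((star (π u) * a * π u) ξ) η : ℂ) ∂μ) ∧
      -- `E` maps into the commutant `G'`
      (∀ a : H →L[ℂ] H, ∀ u : G, E a * π u = π u * E a) ∧
      -- `E` is a projection onto the commutant
      (∀ b : H →L[ℂ] H, (∀ u : G, b * π u = π u * b) → E b = b) ∧
      -- `E` is contractive
      (∀ a, ‖E a‖ ≤ ‖a‖) ∧
      -- `E` is positive
      (∀ a : H →L[ℂ] H, a.IsPositive → (E a).IsPositive) ∧
      -- bimodule property over the commutant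
      (∀ a b₁ b₂ : H →L[ℂ] H, (∀ u : G, b₁ * π u = π u * b₁) →
        (∀ u : G, b₂ * π u = π u * b₂) → E (b₁ * a * b₂) = b₁ * E a * b₂) ∧
      -- the key norm estimate
      (∀ a : H →L[ℂ] H, ‖E a - a‖ ≤ ⨆ u : G, ‖a * π u - π u * a‖) := by
  classical
  -- basic unitary facts
  have hu1 : ∀ u : G, star (π u) * π u = 1 := fun u => ((Unitary.mem_iff).mp (hunitary u)).1
  have hu2 : ∀ u : G, π u * star (π u) = 1 := fun u => ((Unitary.mem_iff).mp (hunitary u)).2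
  have hπnorm : ∀ u : G, ‖π u‖ ≤ 1 := by
    intro u
    have h1 : ‖star (π u) * π u‖ = ‖π u‖ * ‖π u‖ := CStarRing.norm_star_mul_self
    rw [hu1 u] at h1
    have h2 : ‖(1 : H →L[ℂ] H)‖ ≤ 1 := by
      rw [ContinuousLinearMap.one_def]; exact ContinuousLinearMap.norm_id_le
    nlinarith [norm_nonneg (π u)]
  have hstarnorm : ∀ u : G, ‖star (π u)‖ ≤ 1 := fun u => by
    rw [norm_star]; exact hπnorm u
  have hstar_le : ∀ (u : G) (x : H), ‖star (π u) x‖ ≤ ‖x‖ := by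
    intro u x
    calc ‖star (π u) x‖ ≤ ‖star (π u)‖ * ‖x‖ := (star (π u)).le_opNorm x
      _ ≤ 1 * ‖x‖ := by gcongr; exact hstarnorm u
      _ = ‖x‖ := one_mul _
  have hπ_le : ∀ (u : G) (x : H), ‖π u x‖ ≤ ‖x‖ := by
    intro u x
    calc ‖π u x‖ ≤ ‖π u‖ * ‖x‖ := (π u).le_opNorm x
      _ ≤ 1 * ‖x‖ := by gcongr; exact hπnorm u
      _ = ‖x‖ := one_mul _
  -- continuity of `u ↦ (star (π u)) (v u)` for continuous `v`
  have hkeycont : ∀ (v : G → H), Continuous v → Continuous fun u => star (π u) (v u) := by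
    intro v hv
    rw [continuous_iff_continuousAt]
    intro u₀
    have h3 : Filter.Tendsto (fun u => star (π u) (v u) - star (π u) (v u₀)) (nhds u₀)
        (nhds 0) := by
      refine squeeze_zero_norm (a := fun u => ‖v u - v u₀‖) (fun u => ?_) ?_
      · rw [← map_sub]
        exact hstar_le u _
      · have h4 : Filter.Tendsto (fun u => v u - v u₀) (nhds u₀) (nhds (v u₀ - v u₀)) :=
          (hv.tendsto u₀).sub tendsto_const_nhds
        rw [sub_self] at h4
        simpa using h4.norm
    have h2 : Filter.Tendsto (fun u => star (π u) (v u₀)) (nhds u₀)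
        (nhds (star (π u₀) (v u₀))) := (hcont' (v u₀)).tendsto u₀
    have h5 := h3.add h2
    rw [zero_add] at h5
    unfold ContinuousAt
    convert h5 using 2 with u
    abel
  have hFc : ∀ (a : H →L[ℂ] H) (ξ : H), Continuous fun u : G => (star (π u) * a * π u) ξ := by
    intro a ξ
    have : (fun u : G => (star (π u) * a * π u) ξ) = fun u => star (π u) (a (π u ξ)) := by
      funext u; simp [ContinuousLinearMap.mul_apply]
    rw [this]
    exact hkeycont _ (a.continuous.comp (hcont ξ))
  -- integrability of continuous functions
  have hInt : ∀ (v : G → H), Continuous v → Integrable v μ := fun v hv =>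
    hv.integrable_of_hasCompactSupport (HasCompactSupport.of_compactSpace v)
  have hIntC : ∀ (v : G → ℂ), Continuous v → Integrable v μ := fun v hv =>
    hv.integrable_of_hasCompactSupport (HasCompactSupport.of_compactSpace v)
  have hbound : ∀ (a : H →L[ℂ] H) (ξ : H) (u : G), ‖(star (π u) * a * π u) ξ‖ ≤ ‖a‖ * ‖ξ‖ := by
    intro a ξ u
    calc ‖(star (π u) * a * π u) ξ‖ = ‖star (π u) (a (π u ξ))‖ := by
          simp [ContinuousLinearMap.mul_apply]
      _ ≤ ‖a (π u ξ)‖ := hstar_le u _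
      _ ≤ ‖a‖ * ‖π u ξ‖ := a.le_opNorm _
      _ ≤ ‖a‖ * ‖ξ‖ := by gcongr; exact hπ_le u ξ
  -- definition of E
  let E : (H →L[ℂ] H) → (H →L[ℂ] H) := fun a =>
    LinearMap.mkContinuous
      { toFun := fun ξ => ∫ u, (star (π u) * a * π u) ξ ∂μ
        map_add' := by
          intro ξ η
          show (∫ u, (star (π u) * a * π u) (ξ + η) ∂μ)
              = (∫ u, (star (π u) * a * π u) ξ ∂μ) + ∫ u, (star (π u) * a * π u) η ∂μ
          rw [← integral_add (hInt _ (hFc a ξ)) (hInt _ (hFc a η))]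
          congr 1; funext u; rw [map_add]
        map_smul' := by
          intro c ξ
          show (∫ u, (star (π u) * a * π u) (c • ξ) ∂μ)
              = c • ∫ u, (star (π u) * a * π u) ξ ∂μ
          rw [← integral_smul]
          congr 1; funext u; rw [_root_.map_smul] }
      ‖a‖
      (by
        intro ξ
        show ‖∫ u, (star (π u) * a * π u) ξ ∂μ‖ ≤ ‖a‖ * ‖ξ‖
        have hb2 : ∀ᵐ u ∂μ, ‖(star (π u) * a * π u) ξ‖ ≤ ‖a‖ * ‖ξ‖ :=
          Filter.Eventually.of_forall fun u => hbound a ξ u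
        refine le_trans (norm_integral_le_of_norm_le_const hb2) (by simp))
  have hEapp : ∀ (a : H →L[ℂ] H) (ξ : H), E a ξ = ∫ u, (star (π u) * a * π u) ξ ∂μ :=
    fun a ξ => rfl
  -- the WOT formula
  have hWOT : ∀ (a : H →L[ℂ] H) (ξ η : H),
      (inner ℂ (E a ξ) η : ℂ) = ∫ u : G, (inner ℂ ((star (π u) * a * π u) ξ) η : ℂ) ∂μ := by
    intro a ξ η
    rw [hEapp]
    calc (inner ℂ (∫ u, (star (π u) * a * π u) ξ ∂μ) η : ℂ)
        = starRingEnd ℂ (inner ℂ η (∫ u, (star (π u) * a * π u) ξ ∂μ)) :=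
          (inner_conj_symm _ _).symm
      _ = starRingEnd ℂ (∫ u, (inner ℂ η ((star (π u) * a * π u) ξ) : ℂ) ∂μ) := by
          rw [integral_inner (hInt _ (hFc a ξ)) η]
      _ = ∫ u, starRingEnd ℂ (inner ℂ η ((star (π u) * a * π u) ξ) : ℂ) ∂μ :=
          integral_conj.symm
      _ = ∫ u, (inner ℂ ((star (π u) * a * π u) ξ) η : ℂ) ∂μ := by
          congr 1; funext u; rw [inner_conj_symm]
  -- right invariance of the Haar measure on a compact group
  have hRight : μ.IsMulRightInvariant := by
    constructor
    intro g
    have hm : Measurable (fun x : G => x * g) := measurable_mul_const g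
    have hp : IsProbabilityMeasure (μ.map (fun x : G => x * g)) :=
      Measure.isProbabilityMeasure_map hm.aemeasurable
    have hopen : (μ.map (fun x : G => x * g)).IsOpenPosMeasure := by
      constructor
      intro U hU hne
      rw [Measure.map_apply hm hU.measurableSet]
      have hU' : IsOpen ((fun x : G => x * g) ⁻¹' U) := hU.preimage (continuous_mul_right g)
      have hne' : ((fun x : G => x * g) ⁻¹' U).Nonempty := by
        obtain ⟨x, hx⟩ := hne
        exact ⟨x * g⁻¹, by simpa using hx⟩
      exact hU'.measure_ne_zero μ hne'
    have hhaar : (μ.map (fun x : G => x * g)).IsHaarMeasure :=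
      { toIsFiniteMeasureOnCompacts := inferInstance
        toIsMulLeftInvariant := MeasureTheory.isMulLeftInvariant_map_mul_right g
        toIsOpenPosMeasure := hopen }
    have hsc := MeasureTheory.Measure.isMulInvariant_eq_smul_of_compactSpace
      (μ.map (fun x : G => x * g)) μ
    set c := MeasureTheory.Measure.haarScalarFactor (μ.map (fun x : G => x * g)) μ with hcdef
    have hc1 : (c : ENNReal) = 1 := by
      have h7 : (c • μ) Set.univ = (μ.map (fun x : G => x * g)) Set.univ := by rw [← hsc]
      simp only [Measure.smul_apply, measure_univ, smul_eq_mul, ENNReal.smul_def,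
        mul_one] at h7
      exact h7
    rw [hsc]
    ext s hs
    simp only [Measure.smul_apply, smul_eq_mul, ENNReal.smul_def, hc1, one_mul]
  refine ⟨E, hWOT, ?_, ?_, ?_, ?_, ?_, ?_⟩
  · -- commutant
    intro a v
    ext ξ
    have hkey : ∀ u : G, π v * (star (π (u * v)) * a * π (u * v)) =
        star (π u) * a * π u * π v := by
      intro u
      rw [map_mul, star_mul]
      have : π v * (star (π v) * star (π u) * a * (π u * π v)) =
          (π v * star (π v)) * (star (π u) * a * π u * π v) := by noncomm_ring
      rw [this, hu2 v, one_mul]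
    calc (E a * π v) ξ = ∫ u, (star (π u) * a * π u) (π v ξ) ∂μ := hEapp a (π v ξ)
      _ = ∫ u, π v ((star (π (u * v)) * a * π (u * v)) ξ) ∂μ := by
          congr 1; funext u
          have h6 := congrArg (fun T : H →L[ℂ] H => T ξ) (hkey u)
          simpa [ContinuousLinearMap.mul_apply] using h6.symm
      _ = ∫ u, π v ((star (π u) * a * π u) ξ) ∂μ := by
          exact integral_mul_right_eq_self (fun u => π v ((star (π u) * a * π u) ξ)) v
      _ = π v (∫ u, (star (π u) * a * π u) ξ ∂μ) :=
          ContinuousLinearMap.integral_comp_comm (π v) (hInt _ (hFc a ξ))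
      _ = (π v * E a) ξ := by rw [← hEapp]; rfl
  · -- projection
    intro b hb
    ext ξ
    have h1 : ∀ u : G, star (π u) * b * π u = b := by
      intro u
      rw [mul_assoc, hb u, ← mul_assoc, hu1 u, one_mul]
    rw [hEapp]
    simp only [h1]
    simp
  · -- contractive
    intro a
    exact LinearMap.mkContinuous_norm_le _ (norm_nonneg a) _
  · -- positive
    intro a ha
    have hsa : IsSelfAdjoint (E a) := by
      rw [ContinuousLinearMap.isSelfAdjoint_iff']
      have hsa' : ∀ ξ η : H, (inner ℂ (E a ξ) η : ℂ) = inner ℂ ξ (E a η) := by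
        intro ξ η
        have haself : ContinuousLinearMap.adjoint a = a :=
          ContinuousLinearMap.isSelfAdjoint_iff'.mp (ContinuousLinearMap.isSelfAdjoint_iff_isSymmetric.mpr ha.1)
        rw [hWOT, ← inner_conj_symm ξ (E a η), hWOT, ← integral_conj]
        congr 1; funext u
        rw [inner_conj_symm]
        have : ∀ ζ θ : H, (inner ℂ ((star (π u) * a * π u) ζ) θ : ℂ) =
            inner ℂ (a (π u ζ)) (π u θ) := by
          intro ζ θ
          rw [show (star (π u) * a * π u) ζ = star (π u) (a (π u ζ)) by
            simp [ContinuousLinearMap.mul_apply]]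
          rw [ContinuousLinearMap.star_eq_adjoint, ContinuousLinearMap.adjoint_inner_left]
        rw [this ξ η]
        rw [show (star (π u) * a * π u) η = star (π u) (a (π u η)) by
          simp [ContinuousLinearMap.mul_apply]]
        rw [ContinuousLinearMap.star_eq_adjoint, ContinuousLinearMap.adjoint_inner_right]
        conv_lhs => rw [← haself]
        rw [ContinuousLinearMap.adjoint_inner_left]
      exact ((ContinuousLinearMap.eq_adjoint_iff (E a) (E a)).mpr hsa').symm
    refine ⟨ContinuousLinearMap.isSelfAdjoint_iff_isSymmetric.mp hsa, fun ξ => ?_⟩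
    rw [ContinuousLinearMap.reApplyInnerSelf_apply]
    have h2 : (inner ℂ (E a ξ) ξ : ℂ) = ∫ u, (inner ℂ (a (π u ξ)) (π u ξ) : ℂ) ∂μ := by
      rw [hWOT]
      congr 1; funext u
      rw [show (star (π u) * a * π u) ξ = star (π u) (a (π u ξ)) by
        simp [ContinuousLinearMap.mul_apply]]
      rw [ContinuousLinearMap.star_eq_adjoint, ContinuousLinearMap.adjoint_inner_left]
    rw [h2]
    have hintc : Integrable (fun u => (inner ℂ (a (π u ξ)) (π u ξ) : ℂ)) μ := by
      apply hIntC
      exact continuous_inner.comp ((a.continuous.comp (hcont ξ)).prodMk (hcont ξ))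
    rw [← integral_re hintc]
    apply integral_nonneg
    intro u
    exact ha.2 (π u ξ)
  · -- bimodule
    intro a b₁ b₂ h1 h2
    ext ξ
    have hs1 : ∀ u : G, star (π u) * b₁ = b₁ * star (π u) := by
      intro u
      calc star (π u) * b₁ = star (π u) * b₁ * (π u * star (π u)) := by rw [hu2 u, mul_one]
        _ = star (π u) * (b₁ * π u) * star (π u) := by noncomm_ring
        _ = star (π u) * (π u * b₁) * star (π u) := by rw [h1 u]
        _ = (star (π u) * π u) * (b₁ * star (π u)) := by noncomm_ring
        _ = b₁ * star (π u) := by rw [hu1 u, one_mul]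
    have hptw : ∀ u : G, star (π u) * (b₁ * a * b₂) * π u =
        b₁ * (star (π u) * a * π u) * b₂ := by
      intro u
      calc star (π u) * (b₁ * a * b₂) * π u
          = (star (π u) * b₁) * a * (b₂ * π u) := by noncomm_ring
        _ = (b₁ * star (π u)) * a * (π u * b₂) := by rw [hs1 u, h2 u]
        _ = b₁ * (star (π u) * a * π u) * b₂ := by noncomm_ring
    calc E (b₁ * a * b₂) ξ = ∫ u, (star (π u) * (b₁ * a * b₂) * π u) ξ ∂μ := hEapp _ ξ
      _ = ∫ u, b₁ ((star (π u) * a * π u) (b₂ ξ)) ∂μ := by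
          congr 1; funext u
          rw [hptw u]
          simp [ContinuousLinearMap.mul_apply]
      _ = b₁ (∫ u, (star (π u) * a * π u) (b₂ ξ) ∂μ) :=
          ContinuousLinearMap.integral_comp_comm b₁ (hInt _ (hFc a (b₂ ξ)))
      _ = (b₁ * E a * b₂) ξ := by rw [← hEapp]; rfl
  · -- norm estimate
    intro a
    set S : ℝ := ⨆ u : G, ‖a * π u - π u * a‖ with hS
    have hbdd : BddAbove (Set.range fun u : G => ‖a * π u - π u * a‖) := by
      refine ⟨2 * ‖a‖, ?_⟩
      rintro x ⟨u, rfl⟩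
      calc ‖a * π u - π u * a‖ ≤ ‖a * π u‖ + ‖π u * a‖ := norm_sub_le _ _
        _ ≤ ‖a‖ * ‖π u‖ + ‖π u‖ * ‖a‖ := add_le_add (norm_mul_le _ _) (norm_mul_le _ _)
        _ ≤ ‖a‖ * 1 + 1 * ‖a‖ := by gcongr <;> exact hπnorm u
        _ = 2 * ‖a‖ := by ring
    have hS0 : 0 ≤ S := le_trans (norm_nonneg _) (le_ciSup hbdd (1 : G))
    apply ContinuousLinearMap.opNorm_le_bound _ hS0
    intro ξ
    have hconst : Integrable (fun _ : G => a ξ) μ := integrable_const _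
    have heq : (E a - a) ξ = ∫ u, ((star (π u) * a * π u) ξ - a ξ) ∂μ := by
      rw [integral_sub (hInt _ (hFc a ξ)) hconst]
      simp [ContinuousLinearMap.sub_apply, hEapp]
    rw [heq]
    have hptw : ∀ u : G, ‖(star (π u) * a * π u) ξ - a ξ‖ ≤ S * ‖ξ‖ := by
      intro u
      have h3 : (star (π u) * a * π u) ξ - a ξ = star (π u) ((a * π u - π u * a) ξ) := by
        have h4 : star (π u) * a * π u - a = star (π u) * (a * π u - π u * a) := by
          have : star (π u) * (π u * a) = a := by rw [← mul_assoc, hu1 u, one_mul]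
          rw [mul_sub, ← mul_assoc, this]
        calc (star (π u) * a * π u) ξ - a ξ = (star (π u) * a * π u - a) ξ := by
              rw [ContinuousLinearMap.sub_apply]
          _ = (star (π u) * (a * π u - π u * a)) ξ := by rw [h4]
          _ = star (π u) ((a * π u - π u * a) ξ) := by rw [ContinuousLinearMap.mul_apply]
      rw [h3]
      calc ‖star (π u) ((a * π u - π u * a) ξ)‖ ≤ ‖(a * π u - π u * a) ξ‖ := hstar_le u _
        _ ≤ ‖a * π u - π u * a‖ * ‖ξ‖ := (a * π u - π u * a).le_opNorm ξ
        _ ≤ S * ‖ξ‖ := by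
            apply mul_le_mul_of_nonneg_right _ (norm_nonneg ξ)
            exact le_ciSup hbdd u
    have hb3 : ∀ᵐ u ∂μ, ‖(star (π u) * a * π u) ξ - a ξ‖ ≤ S * ‖ξ‖ :=
      Filter.Eventually.of_forall hptw
    refine le_trans (norm_integral_le_of_norm_le_const hb3) (by simp)
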